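/- Let n ≥ 2 be a positive integer and set i₀ = 10^n − 10^{⌊n/2⌋}. Then ∑_{j=0}^{n−1} ⟨i₀/10^j⟩ equals n/2 − 10/9 if n is even and n/2 − 11/18 if n is odd, up to an error of O(10^{−n/2}). -/

import Mathlib

open Finset

lemma geom_aux : ∀ d : ℕ, ∑ k ∈ range d, ((1:ℝ)/10)^(k+1) = (1 - (1/10:ℝ)^d)/9 := by
  intro d
  induction d with
  | zero => simp
  | succ d ih => rw [sum_range_succ, ih]; ring

lemma term_eq (n m j : ℕ) (hm : m ≤ n) (hj : j < n) :
    Int.fract (((10 ^ n - 10 ^ m : ℕ) : ℝ) / 10 ^ j) =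
      if j ≤ m then 0 else 1 - (10:ℝ) ^ m / 10 ^ j := by
  have hcast : ((10 ^ n - 10 ^ m : ℕ) : ℝ) = (10:ℝ) ^ n - 10 ^ m := by
    have h : (10:ℕ) ^ m ≤ 10 ^ n := Nat.pow_le_pow_right (by norm_num) hm
    push_cast [h]
    ring
  have hnj : (10:ℝ) ^ n / 10 ^ j = ((10 ^ (n - j) : ℤ) : ℝ) := by
    push_cast
    rw [pow_sub₀ (10:ℝ) (by norm_num) hj.le, div_eq_mul_inv]
  rw [hcast, sub_div, hnj, sub_eq_add_neg, Int.fract_intCast_add]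
  by_cases h : j ≤ m
  · have : (10:ℝ) ^ m / 10 ^ j = ((10 ^ (m - j) : ℤ) : ℝ) := by
      push_cast
      rw [pow_sub₀ (10:ℝ) (by norm_num) h, div_eq_mul_inv]
    rw [this, if_pos h, ← Int.cast_neg, Int.fract_intCast]
  · rw [if_neg h]
    have hx0 : (0:ℝ) < (10:ℝ) ^ m / 10 ^ j := by positivity
    have hx1 : (10:ℝ) ^ m / 10 ^ j < 1 := by
      rw [div_lt_one (by positivity)]
      exact pow_lt_pow_right₀ (by norm_num) (by omega)
    have hfr : Int.fract ((10:ℝ) ^ m / 10 ^ j) = (10:ℝ) ^ m / 10 ^ j :=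
      Int.fract_eq_self.2 ⟨hx0.le, hx1⟩
    rw [Int.fract_neg (by rw [hfr]; exact hx0.ne'), hfr]

lemma sum_eq (n : ℕ) (hn : 2 ≤ n) :
    ∑ j ∈ range n, Int.fract (((10 ^ n - 10 ^ (n / 2) : ℕ) : ℝ) / 10 ^ j)
      = ((n - 1 - n / 2 : ℕ) : ℝ) - (1 - (1/10:ℝ) ^ (n - 1 - n / 2)) / 9 := by
  set m := n / 2 with hm
  have hmn : m + 1 ≤ n := by omega
  have h1 : ∑ j ∈ range n, Int.fract (((10 ^ n - 10 ^ m : ℕ) : ℝ) / 10 ^ j)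
      = ∑ j ∈ range n, (if j ≤ m then (0:ℝ) else 1 - (10:ℝ) ^ m / 10 ^ j) := by
    apply Finset.sum_congr rfl
    intro j hj
    exact term_eq n m j (by omega) (mem_range.mp hj)
  rw [h1, range_eq_Ico, ← Finset.sum_Ico_consecutive _ (Nat.zero_le (m+1)) hmn]
  have h2 : ∑ j ∈ Finset.Ico 0 (m+1), (if j ≤ m then (0:ℝ) else 1 - (10:ℝ) ^ m / 10 ^ j) = 0 := by
    apply Finset.sum_eq_zero
    intro j hj
    rw [if_pos (by simp at hj; omega)]
  rw [h2, zero_add]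
  have h3 : ∑ j ∈ Finset.Ico (m+1) n, (if j ≤ m then (0:ℝ) else 1 - (10:ℝ) ^ m / 10 ^ j)
      = ∑ j ∈ Finset.Ico (m+1) n, (1 - (10:ℝ) ^ m / 10 ^ j) := by
    apply Finset.sum_congr rfl
    intro j hj
    rw [if_neg (by simp at hj; omega)]
  rw [h3, Finset.sum_Ico_eq_sum_range]
  have h4 : ∀ k : ℕ, 1 - (10:ℝ) ^ m / 10 ^ (m + 1 + k) = 1 - ((1:ℝ)/10) ^ (k+1) := by
    intro k
    rw [pow_add, pow_add, one_div_pow]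
    field_simp
    ring
  simp only [h4]
  rw [Finset.sum_sub_distrib, Finset.sum_const, geom_aux]
  have : n - (m + 1) = n - 1 - m := by omega
  rw [this]
  simp

theorem stmt6 :
    ∃ C > (0:ℝ), ∀ n : ℕ, 2 ≤ n →
      |(∑ j ∈ Finset.range n,
          Int.fract (((10 ^ n - 10 ^ (n / 2) : ℕ) : ℝ) / 10 ^ j)) -
        (if Even n then (n:ℝ) / 2 - 10 / 9 else (n:ℝ) / 2 - 11 / 18)|
        ≤ C * (10:ℝ) ^ (-(n:ℝ) / 2) := by
  refine ⟨2, by norm_num, ?_⟩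
  intro n hn
  rw [sum_eq n hn]
  rcases Nat.even_or_odd n with he | ho
  · rw [if_pos he]
    obtain ⟨m, rfl⟩ := he
    obtain ⟨k, rfl⟩ : ∃ k, m = k + 1 := ⟨m - 1, by omega⟩
    have hd : (k + 1) + (k + 1) - 1 - ((k + 1) + (k + 1)) / 2 = k := by omega
    rw [hd]
    have hrp : (10:ℝ) ^ (-((((k+1)+(k+1) : ℕ)):ℝ) / 2) = ((1:ℝ)/10) ^ (k+1) := by
      have h : (-(((((k+1)+(k+1) : ℕ)):ℝ)) / 2) = -(((k+1 : ℕ)):ℝ) := by push_cast; ring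
      rw [h, Real.rpow_neg (by norm_num), Real.rpow_natCast]
      rw [div_pow, one_pow, one_div]
    rw [hrp]
    have habs : ((k:ℝ) - (1 - (1/10:ℝ) ^ k) / 9 -
        ((((k+1)+(k+1) : ℕ) : ℝ) / 2 - 10 / 9)) = (1/10:ℝ)^k / 9 := by
      push_cast; ring
    rw [habs, abs_of_pos (by positivity), pow_succ]
    have hp : (0:ℝ) < (1/10:ℝ)^k := by positivity
    nlinarith
  · rw [if_neg (Nat.not_even_iff_odd.mpr ho)]
    obtain ⟨m, rfl⟩ := ho
    have hd : 2 * m + 1 - 1 - (2 * m + 1) / 2 = m := by omega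
    rw [hd]
    have habs : ((m:ℝ) - (1 - (1/10:ℝ) ^ m) / 9 -
        (((2*m+1 : ℕ) : ℝ) / 2 - 11 / 18)) = (1/10:ℝ)^m / 9 := by
      push_cast; ring
    rw [habs, abs_of_pos (by positivity)]
    have hrp : ((1:ℝ)/10) ^ (m+1) ≤ (10:ℝ) ^ (-(((2*m+1 : ℕ)):ℝ) / 2) := by
      have h1 : ((1:ℝ)/10) ^ (m+1) = (10:ℝ) ^ (-(((m+1 : ℕ)):ℝ)) := by
        rw [Real.rpow_neg (by norm_num), Real.rpow_natCast, div_pow, one_pow, one_div]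
      rw [h1]
      apply Real.rpow_le_rpow_of_exponent_le (by norm_num)
      push_cast; linarith
    have hp : (0:ℝ) < (1/10:ℝ)^m := by positivity
    calc (1/10:ℝ)^m / 9 ≤ 2 * ((1/10:ℝ)^(m+1)) := by rw [pow_succ]; nlinarith
      _ ≤ 2 * (10:ℝ) ^ (-(((2*m+1 : ℕ)):ℝ) / 2) := by linarith
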